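/- Let M be a randomized mechanism on 𝒳, let ∼ be a relation on 𝒳, and let ∼^op be the opposite relation defined by X ∼^op X' if and only if X' ∼ X. If f is the optimal tradeoff function of M with respect to ∼ and f^op is the optimal tradeoff function of M with respect to ∼^op, then f^op equals the left-continuous inverse f^{-1} of f. -/

import Mathlib

open MeasureTheory Real Set

noncomputable section

/-- Hockey-stick divergence of order `a > 0`:
`D^HS_a(P‖Q) = sup_A (P(A) − a·Q(A))` over measurable sets `A`. -/
def hsDiv {Z : Type*} [MeasurableSpace Z] (a : ℝ) (P Q : Measure Z) : ℝ :=
  sSup {x : ℝ | ∃ A : Set Z, MeasurableSet A ∧ x = (P A).toReal - a * (Q A).toReal}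

/-- The privacy profile of a mechanism `M` with respect to a neighboring relation `rel`:
`δ(ε) = sup_{X ≈ X'} D^HS_{e^ε}(M(X)‖M(X'))`. -/
def privacyProfile {𝒳 Z : Type*} [MeasurableSpace Z] (M : 𝒳 → Measure Z)
    (rel : 𝒳 → 𝒳 → Prop) (ε : ℝ) : ℝ :=
  sSup {x : ℝ | ∃ X X' : 𝒳, rel X X' ∧ x = hsDiv (exp ε) (M X) (M X')}

/-- Tradeoff function `Λ(P‖Q)(α)`: the least type-II error
`E_Q[1 − φ]` over measurable tests `φ : Z → [0,1]` with `E_P[φ] = α`. -/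
def tradeoff {Z : Type*} [MeasurableSpace Z] (P Q : Measure Z) (α : ℝ) : ℝ :=
  sInf {x : ℝ | ∃ φ : Z → ℝ, Measurable φ ∧ (∀ z, φ z ∈ Icc (0 : ℝ) 1) ∧
    (∫ z, φ z ∂P) = α ∧ x = ∫ z, (1 - φ z) ∂Q}

/-- `M` satisfies `f`-differential privacy with respect to `rel`. -/
def fDP {𝒳 Z : Type*} [MeasurableSpace Z] (M : 𝒳 → Measure Z)
    (rel : 𝒳 → 𝒳 → Prop) (f : ℝ → ℝ) : Prop :=
  ∀ X X' : 𝒳, rel X X' → ∀ α ∈ Icc (0 : ℝ) 1, f α ≤ tradeoff (M X) (M X') α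

/-- A tradeoff function: convex, continuous, non-increasing `[0,1] → [0,1]`
with `f α ≤ 1 − α`. -/
def IsTradeoffFun (f : ℝ → ℝ) : Prop :=
  ConvexOn ℝ (Icc 0 1) f ∧ ContinuousOn f (Icc 0 1) ∧ AntitoneOn f (Icc 0 1) ∧
    ∀ α ∈ Icc (0 : ℝ) 1, f α ∈ Icc (0 : ℝ) 1 ∧ f α ≤ 1 - α

/-- `f` is the optimal tradeoff function of `M` with respect to `rel`. -/
def IsOptimalTradeoff {𝒳 Z : Type*} [MeasurableSpace Z] (M : 𝒳 → Measure Z)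
    (rel : 𝒳 → 𝒳 → Prop) (f : ℝ → ℝ) : Prop :=
  IsTradeoffFun f ∧ fDP M rel f ∧
    ∀ g : ℝ → ℝ, IsTradeoffFun g → fDP M rel g → ∀ α ∈ Icc (0 : ℝ) 1, g α ≤ f α

/-- Left-continuous inverse of a non-increasing function on `[0,1]`. -/
def leftInv (g : ℝ → ℝ) (α : ℝ) : ℝ :=
  sInf {t : ℝ | t ∈ Icc (0 : ℝ) 1 ∧ g t ≤ α}

/-- Convex conjugate of the `+∞`-extension to `ℝ` of a real-valued function on `[0,1]`:
`h*(s) = sup_{x ∈ [0,1]} (s·x − h(x))`. -/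
def conjOn01 (h : ℝ → ℝ) (s : ℝ) : ℝ :=
  sSup {y : ℝ | ∃ x ∈ Icc (0 : ℝ) 1, y = s * x - h x}

section AuxLemmas

variable {f : ℝ → ℝ}

lemma myTradeoff_one (hf : IsTradeoffFun f) : f 1 = 0 := by
  have h := hf.2.2.2 1 ⟨zero_le_one, le_refl 1⟩
  have := h.1.1
  linarith [h.2]

lemma myS_nonempty (hf : IsTradeoffFun f) {α : ℝ} (hα : 0 ≤ α) :
    {t : ℝ | t ∈ Icc (0:ℝ) 1 ∧ f t ≤ α}.Nonempty :=
  ⟨1, ⟨zero_le_one, le_refl 1⟩, by rw [myTradeoff_one hf]; exact hα⟩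

lemma myS_bddBelow {α : ℝ} : BddBelow {t : ℝ | t ∈ Icc (0:ℝ) 1 ∧ f t ≤ α} :=
  ⟨0, fun t ht => ht.1.1⟩

lemma myLeftInv_le {α t : ℝ} (ht : t ∈ Icc (0:ℝ) 1) (hft : f t ≤ α) : leftInv f α ≤ t :=
  csInf_le myS_bddBelow ⟨ht, hft⟩

lemma myLe_leftInv (hf : IsTradeoffFun f) {α c : ℝ} (hα : 0 ≤ α)
    (h : ∀ t ∈ Icc (0:ℝ) 1, f t ≤ α → c ≤ t) : c ≤ leftInv f α :=
  le_csInf (myS_nonempty hf hα) (fun t ht => h t ht.1 ht.2)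

lemma myLeftInv_mem (hf : IsTradeoffFun f) {α : ℝ} (hα : 0 ≤ α) :
    leftInv f α ∈ Icc (0:ℝ) 1 ∧ f (leftInv f α) ≤ α := by
  have hclosed : IsClosed {t : ℝ | t ∈ Icc (0:ℝ) 1 ∧ f t ≤ α} := by
    have heq : {t : ℝ | t ∈ Icc (0:ℝ) 1 ∧ f t ≤ α} = Icc 0 1 ∩ f ⁻¹' (Iic α) := by
      ext t; simp only [Set.mem_setOf_eq, Set.mem_inter_iff, Set.mem_preimage, Set.mem_Iic]
    rw [heq]
    exact hf.2.1.preimage_isClosed_of_isClosed isClosed_Icc isClosed_Iic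
  exact hclosed.csInf_mem (myS_nonempty hf hα) myS_bddBelow

lemma myLeftInv_nonneg (hf : IsTradeoffFun f) {α : ℝ} (hα : 0 ≤ α) :
    0 ≤ leftInv f α := (myLeftInv_mem hf hα).1.1

lemma myLeftInv_le_one (hf : IsTradeoffFun f) {α : ℝ} (hα : 0 ≤ α) :
    leftInv f α ≤ 1 := (myLeftInv_mem hf hα).1.2

lemma myLeftInv_antitone (hf : IsTradeoffFun f) {α β : ℝ} (hα : 0 ≤ α) (hαβ : α ≤ β) :
    leftInv f β ≤ leftInv f α :=
  csInf_le_csInf myS_bddBelow (myS_nonempty hf hα)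
    (fun t ht => ⟨ht.1, ht.2.trans hαβ⟩)

/-- Strict decrease past the left inverse: if `a > 0` and `leftInv f a < t ≤ 1`
then `f t < a`. -/
lemma myStrict (hf : IsTradeoffFun f) {a t : ℝ} (ha : 0 < a)
    (h1 : leftInv f a < t) (h2 : t ≤ 1) : f t < a := by
  have hmem := myLeftInv_mem hf ha.le
  set s := leftInv f a with hs
  rcases eq_or_lt_of_le h2 with rfl | h2'
  · rw [myTradeoff_one hf]; exact ha
  · -- t = λ s + (1-λ) 1 with λ = (1-t)/(1-s)
    have hs1 : s < 1 := lt_of_lt_of_le h1 h2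
    set lam : ℝ := (1 - t) / (1 - s) with hlam
    have h1s : (0:ℝ) < 1 - s := by linarith
    have hlam_pos : 0 < lam := div_pos (by linarith) h1s
    have hlam_lt : lam < 1 := by
      rw [hlam, div_lt_one h1s]; linarith
    have hcomb : lam * s + (1 - lam) * (1:ℝ) = t := by
      rw [hlam, div_mul_eq_mul_div, one_sub_div h1s.ne', mul_one, ← add_div, div_eq_iff h1s.ne']
      ring
    have hconv := hf.1.2 hmem.1 (⟨zero_le_one, le_refl 1⟩ : (1:ℝ) ∈ Icc (0:ℝ) 1)
      hlam_pos.le (by linarith : (0:ℝ) ≤ 1 - lam) (by ring)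
    simp only [smul_eq_mul] at hconv
    rw [hcomb, myTradeoff_one hf] at hconv
    have : f t ≤ lam * f s := by linarith
    have hfs : f s ≤ a := hmem.2
    have hfs0 : 0 ≤ f s := (hf.2.2.2 s hmem.1).1.1
    calc f t ≤ lam * f s := this
      _ ≤ lam * a := by nlinarith
      _ < a := by nlinarith

end AuxLemmas

section Main

variable {f : ℝ → ℝ}

lemma myLeftInv_convexOn (hf : IsTradeoffFun f) : ConvexOn ℝ (Icc 0 1) (leftInv f) := by
  refine ⟨convex_Icc 0 1, ?_⟩
  intro α hα β hβ a b ha hb hab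
  simp only [smul_eq_mul]
  have hsα := myLeftInv_mem hf hα.1
  have hsβ := myLeftInv_mem hf hβ.1
  set s := leftInv f α
  set t := leftInv f β
  have hmemcomb : a * s + b * t ∈ Icc (0:ℝ) 1 := by
    constructor
    · have := hsα.1.1; have := hsβ.1.1; positivity
    · nlinarith [hsα.1.2, hsβ.1.2]
  have hconv := hf.1.2 hsα.1 hsβ.1 ha hb hab
  simp only [smul_eq_mul] at hconv
  have hle : f (a * s + b * t) ≤ a * α + b * β := by
    nlinarith [hsα.2, hsβ.2]
  exact myLeftInv_le hmemcomb hle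

lemma myLeftInv_continuousOn (hf : IsTradeoffFun f) :
    ContinuousOn (leftInv f) (Icc 0 1) := by
  intro a ha
  rw [Metric.continuousWithinAt_iff]
  intro ε hε
  set g := leftInv f with hg
  -- Left claim: bound for β ≤ a
  have hleft : ∃ δ > 0, ∀ β ∈ Icc (0:ℝ) 1, β ≤ a → a - β < δ → g β ≤ g a + ε / 2 := by
    by_cases h1 : 1 ≤ g a + ε / 2
    · exact ⟨1, one_pos, fun β hβ _ _ =>
        le_trans (myLeftInv_le_one hf hβ.1) h1⟩
    push_neg at h1
    rcases eq_or_lt_of_le ha.1 with heq | hapos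
    · -- a = 0 : only β = 0 possible
      refine ⟨1, one_pos, fun β hβ hβa _ => ?_⟩
      have : β = a := le_antisymm hβa (heq ▸ hβ.1)
      rw [this]; linarith [hε]
    · -- a > 0
      set t : ℝ := g a + ε / 2 with htdef
      have hga := myLeftInv_mem hf ha.1
      have hgt : g a < t := by dsimp [t]; linarith
      have hft : f t < a := myStrict hf hapos hgt h1.le
      refine ⟨a - f t, by linarith, fun β hβ hβa hclose => ?_⟩
      have hftβ : f t ≤ β := by linarith
      have htmem : t ∈ Icc (0:ℝ) 1 := ⟨by linarith [hga.1.1, hε], h1.le⟩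
      exact myLeftInv_le htmem hftβ
  -- Right claim: bound for a ≤ β
  have hright : ∃ δ > 0, ∀ β ∈ Icc (0:ℝ) 1, a ≤ β → β - a < δ → g a - ε / 2 ≤ g β := by
    by_cases h0 : g a - ε / 2 ≤ 0
    · exact ⟨1, one_pos, fun β hβ _ _ =>
        le_trans h0 (myLeftInv_nonneg hf hβ.1)⟩
    push_neg at h0
    set t : ℝ := g a - ε / 2 with htdef
    have hga := myLeftInv_mem hf ha.1
    have htlt : t < g a := by dsimp [t]; linarith
    have htmem : t ∈ Icc (0:ℝ) 1 := ⟨h0.le, by linarith [hga.1.2]⟩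
    have hfta : a < f t := by
      by_contra hcon
      push_neg at hcon
      exact absurd (myLeftInv_le htmem hcon) (not_le.mpr htlt)
    refine ⟨f t - a, by linarith, fun β hβ hβa hclose => ?_⟩
    refine myLe_leftInv hf hβ.1 (fun s hs hfs => ?_)
    by_contra hst
    push_neg at hst
    have : f t ≤ f s := hf.2.2.1 hs htmem hst.le
    linarith
  obtain ⟨δL, hδL, hL⟩ := hleft
  obtain ⟨δR, hδR, hR⟩ := hright
  refine ⟨min δL δR, lt_min hδL hδR, fun β hβ hdist => ?_⟩
  rw [Real.dist_eq] at hdist ⊢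
  rw [abs_lt] at hdist ⊢
  rcases le_total β a with hba | hab
  · have h1 : g β ≤ g a + ε / 2 := hL β hβ hba (by cases hdist; linarith [min_le_left δL δR])
    have h2 : g a ≤ g β := myLeftInv_antitone hf hβ.1 hba
    constructor <;> linarith
  · have h1 : g a - ε / 2 ≤ g β := hR β hβ hab (by cases hdist; linarith [min_le_right δL δR])
    have h2 : g β ≤ g a := myLeftInv_antitone hf ha.1 hab
    constructor <;> linarith

lemma myLeftInv_antitoneOn (hf : IsTradeoffFun f) : AntitoneOn (leftInv f) (Icc 0 1) :=
  fun _ hα _ _ h => myLeftInv_antitone hf hα.1 h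

lemma myLeftInv_isTradeoffFun (hf : IsTradeoffFun f) : IsTradeoffFun (leftInv f) := by
  refine ⟨myLeftInv_convexOn hf, myLeftInv_continuousOn hf, myLeftInv_antitoneOn hf, ?_⟩
  intro α hα
  refine ⟨(myLeftInv_mem hf hα.1).1, ?_⟩
  refine myLeftInv_le ⟨by linarith [hα.2], by linarith [hα.1]⟩ ?_
  have := (hf.2.2.2 (1 - α) ⟨by linarith [hα.2], by linarith [hα.1]⟩).2
  linarith

/-- Involution inequality: `h α ≤ leftInv (leftInv h) α`. -/
lemma myInvolution (hf : IsTradeoffFun f) {α : ℝ} (hα : α ∈ Icc (0:ℝ) 1) :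
    f α ≤ leftInv (leftInv f) α := by
  refine myLe_leftInv (myLeftInv_isTradeoffFun hf) hα.1 (fun t ht hlt => ?_)
  have h1 := (myLeftInv_mem hf ht.1).2
  have h2 : f α ≤ f (leftInv f t) :=
    hf.2.2.1 (myLeftInv_mem hf ht.1).1 hα hlt
  linarith

/-- Monotonicity of leftInv in the function. -/
lemma myLeftInv_mono {g h : ℝ → ℝ} (hh : IsTradeoffFun h)
    (hle : ∀ t ∈ Icc (0:ℝ) 1, g t ≤ h t) {α : ℝ} (hα : 0 ≤ α) :
    leftInv g α ≤ leftInv h α :=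
  csInf_le_csInf myS_bddBelow (myS_nonempty hh hα)
    (fun t ht => ⟨ht.1, (hle t ht.1).trans ht.2⟩)

end Main

section Transfer

/-- If `f` lower-bounds `tradeoff P Q` on `[0,1]`, then `leftInv f` lower-bounds
`tradeoff Q P` on `[0,1]`. -/
lemma myTransfer {Z : Type*} [MeasurableSpace Z] {P Q : Measure Z}
    [IsProbabilityMeasure P] [IsProbabilityMeasure Q] {f : ℝ → ℝ}
    (hbound : ∀ t ∈ Icc (0:ℝ) 1, f t ≤ tradeoff P Q t)
    {α : ℝ} (hα : α ∈ Icc (0:ℝ) 1) :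
    leftInv f α ≤ tradeoff Q P α := by
  refine le_csInf ?_ ?_
  · -- nonempty: constant test α
    refine ⟨∫ z, (1 - (fun _ : Z => α) z) ∂P, (fun _ => α), measurable_const,
      fun _ => hα, ?_, rfl⟩
    simp
  · rintro x ⟨φ, hφm, hφ01, hφint, rfl⟩
    -- integrability
    have hint : ∀ (μ : Measure Z), IsProbabilityMeasure μ → Integrable φ μ := by
      intro μ hμ
      refine (integrable_const (1:ℝ)).mono' hφm.aestronglyMeasurable ?_
      filter_upwards with z
      rw [Real.norm_eq_abs, abs_le]
      exact ⟨by linarith [(hφ01 z).1], (hφ01 z).2⟩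
    have hintP : Integrable φ P := hint P inferInstance
    have hintQ : Integrable φ Q := hint Q inferInstance
    set t : ℝ := ∫ z, (1 - φ z) ∂P with htdef
    have htval : t = 1 - ∫ z, φ z ∂P := by
      rw [htdef, integral_sub (integrable_const 1) hintP]
      simp
    have hφP_mem : (∫ z, φ z ∂P) ∈ Icc (0:ℝ) 1 := by
      constructor
      · exact integral_nonneg (fun z => (hφ01 z).1)
      · calc (∫ z, φ z ∂P) ≤ ∫ _, (1:ℝ) ∂P :=
              integral_mono hintP (integrable_const 1) (fun z => (hφ01 z).2)
          _ = 1 := by simp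
    have htmem : t ∈ Icc (0:ℝ) 1 := by
      rw [htval]; constructor <;> [linarith [hφP_mem.2]; linarith [hφP_mem.1]]
    -- tradeoff P Q t ≤ α via test ψ = 1 - φ
    have htrade : tradeoff P Q t ≤ α := by
      refine csInf_le ⟨0, ?_⟩ ?_
      · rintro y ⟨ψ, hψm, hψ01, hψint, rfl⟩
        exact integral_nonneg (fun z => by simp only [Pi.zero_apply]; linarith [(hψ01 z).2])
      · refine ⟨fun z => 1 - φ z, (measurable_const.sub hφm), ?_, rfl, ?_⟩
        · intro z; constructor
          · show (0:ℝ) ≤ 1 - φ z; linarith [(hφ01 z).2]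
          · show 1 - φ z ≤ 1; linarith [(hφ01 z).1]
        · rw [← hφint]
          congr 1 with z
          ring
    have hft : f t ≤ α := le_trans (hbound t htmem) htrade
    exact myLeftInv_le htmem hft

lemma myfDP_transfer {𝒳 Z : Type*} [MeasurableSpace Z] {M : 𝒳 → Measure Z}
    (hM : ∀ X, IsProbabilityMeasure (M X)) {rel : 𝒳 → 𝒳 → Prop} {f : ℝ → ℝ}
    (h : fDP M rel f) : fDP M (fun X X' => rel X' X) (leftInv f) := by
  intro X X' hrel α hα
  have := hM X
  have := hM X'
  exact myTransfer (fun t ht => h X' X hrel t ht) hα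

theorem optimalTradeoff_op_eq_leftInv'
    {𝒳 Z : Type*} [MeasurableSpace Z] (M : 𝒳 → Measure Z)
    (hM : ∀ X, IsProbabilityMeasure (M X)) (rel : 𝒳 → 𝒳 → Prop)
    (f fop : ℝ → ℝ)
    (hf : (IsTradeoffFun f ∧ fDP M rel f ∧
      ∀ g : ℝ → ℝ, IsTradeoffFun g → fDP M rel g → ∀ α ∈ Icc (0 : ℝ) 1, g α ≤ f α))
    (hfop : (IsTradeoffFun fop ∧ fDP M (fun X X' => rel X' X) fop ∧
      ∀ g : ℝ → ℝ, IsTradeoffFun g → fDP M (fun X X' => rel X' X) g →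
        ∀ α ∈ Icc (0 : ℝ) 1, g α ≤ fop α)) :
    ∀ α ∈ Icc (0 : ℝ) 1, fop α = leftInv f α := by
  intro α hα
  have hTg : IsTradeoffFun (leftInv f) := myLeftInv_isTradeoffFun hf.1
  have hTgop : IsTradeoffFun (leftInv fop) := myLeftInv_isTradeoffFun hfop.1
  have hAg : fDP M (fun X X' => rel X' X) (leftInv f) := myfDP_transfer hM hf.2.1
  have hAgop : fDP M rel (leftInv fop) := myfDP_transfer hM hfop.2.1
  have h1 : leftInv f α ≤ fop α := hfop.2.2 _ hTg hAg α hα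
  have h2 : ∀ t ∈ Icc (0:ℝ) 1, leftInv fop t ≤ f t := hf.2.2 _ hTgop hAgop
  have h3 : fop α ≤ leftInv (leftInv fop) α := myInvolution hfop.1 hα
  have h4 : leftInv (leftInv fop) α ≤ leftInv f α := myLeftInv_mono hf.1 h2 hα.1
  exact le_antisymm (h3.trans h4) h1


/-- if `f` is the optimal tradeoff function of `M` with respect to `∼` and
`f^op` the optimal tradeoff function with respect to the opposite relation `∼^op`, then
`f^op` equals the left-continuous inverse `f⁻¹` of `f` on `[0,1]`. -/
theorem optimalTradeoff_op_eq_leftInv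
    {𝒳 Z : Type*} [MeasurableSpace Z] (M : 𝒳 → Measure Z)
    (hM : ∀ X, IsProbabilityMeasure (M X)) (rel : 𝒳 → 𝒳 → Prop)
    (f fop : ℝ → ℝ)
    (hf : IsOptimalTradeoff M rel f)
    (hfop : IsOptimalTradeoff M (fun X X' => rel X' X) fop) :
    ∀ α ∈ Icc (0 : ℝ) 1, fop α = leftInv f α := by
  exact optimalTradeoff_op_eq_leftInv' M hM rel f fop hf hfop
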